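/- (PI separable optimality, 'only if' direction) With the averaged ensemble {(η̃_ω, ρ̃_ω)}_{ω∈Ω_S}, if η̃_μ ρ̃_μ − η̃_{ω°} ρ̃_{ω°} ∉ SEP* for some ω° ∈ Ω_S, then there exists a separable POVM whose averaged success probability Σ_ω η̃_ω Tr(ρ̃_ω M̃_ω) strictly exceeds η̃_μ; hence p_SEP^PI(E,S) > 2η̃_μ. -/

import Mathlib

open Matrix
open scoped ComplexOrder

/-- Hermitian operators on the bipartite space `ℂ^dA ⊗ ℂ^dB`, modeled as matrices
indexed by `Fin dA × Fin dB`. -/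
abbrev Mat (dA dB : ℕ) := Matrix (Fin dA × Fin dB) (Fin dA × Fin dB) ℂ

/-- A bipartite operator is separable if it is a finite sum of Kronecker products of
positive-semidefinite operators on the two factors. -/
def IsSep {dA dB : ℕ} (E : Mat dA dB) : Prop :=
  ∃ (n : ℕ) (A : Fin n → Matrix (Fin dA) (Fin dA) ℂ)
    (B : Fin n → Matrix (Fin dB) (Fin dB) ℂ),
    (∀ l, (A l).PosSemidef) ∧ (∀ l, (B l).PosSemidef) ∧
      E = ∑ l, Matrix.kroneckerMap (· * ·) (A l) (B l)

/-- Membership in the dual cone `SEP*` (block positivity): Hermitian with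
`Tr(E F) ≥ 0` for every separable `F`. -/
def InSEPdual {dA dB : ℕ} (E : Mat dA dB) : Prop :=
  E.IsHermitian ∧ ∀ F : Mat dA dB, IsSep F → 0 ≤ (E * F).trace

section Helpers

set_option linter.unusedVariables false

variable {dA dB : ℕ}

lemma psd_smul_real {n : Type*} [Fintype n] {A : Matrix n n ℂ} (hA : A.PosSemidef) {c : ℝ}
    (hc : 0 ≤ c) : ((c : ℂ) • A).PosSemidef := by
  constructor
  · have h1 := hA.1
    unfold Matrix.IsHermitian at *
    rw [conjTranspose_smul, h1]
    congr 1
    simp [Complex.ext_iff]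
  · intro x
    exact (hA.smul (Complex.zero_le_real.mpr hc)).2 x

lemma kron_conjT {m n : Type*} (A : Matrix m m ℂ) (B : Matrix n n ℂ) :
    (Matrix.kroneckerMap (· * ·) A B)ᴴ = Matrix.kroneckerMap (· * ·) Aᴴ Bᴴ := by
  ext ⟨i,j⟩ ⟨k,l⟩
  simp [conjTranspose_apply, kroneckerMap_apply]

lemma isSep_zero : IsSep (0 : Mat dA dB) :=
  ⟨0, fun _ => 0, fun _ => 0, fun l => l.elim0, fun l => l.elim0, by simp⟩

lemma isSep_kron {A : Matrix (Fin dA) (Fin dA) ℂ} {B : Matrix (Fin dB) (Fin dB) ℂ}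
    (hA : A.PosSemidef) (hB : B.PosSemidef) :
    IsSep (Matrix.kroneckerMap (· * ·) A B) :=
  ⟨1, fun _ => A, fun _ => B, fun _ => hA, fun _ => hB, by simp⟩

lemma isSep_add {E F : Mat dA dB} (hE : IsSep E) (hF : IsSep F) : IsSep (E + F) := by
  obtain ⟨n, A, B, hA, hB, rfl⟩ := hE
  obtain ⟨m, A', B', hA', hB', rfl⟩ := hF
  refine ⟨n + m, Fin.append A A', Fin.append B B', ?_, ?_, ?_⟩
  · intro l
    refine Fin.addCases (fun i => ?_) (fun i => ?_) l <;>
      simp [Fin.append_left, Fin.append_right, hA, hA']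
  · intro l
    refine Fin.addCases (fun i => ?_) (fun i => ?_) l <;>
      simp [Fin.append_left, Fin.append_right, hB, hB']
  · rw [Fin.sum_univ_add]
    congr 1 <;> apply Finset.sum_congr rfl <;> intro i _ <;>
      simp [Fin.append_left, Fin.append_right]

lemma isSep_sum {ι : Type*} (s : Finset ι) (f : ι → Mat dA dB)
    (h : ∀ i ∈ s, IsSep (f i)) : IsSep (∑ i ∈ s, f i) :=
  Finset.sum_induction f IsSep (fun _ _ ha hb => isSep_add ha hb) isSep_zero h

lemma isSep_smul {E : Mat dA dB} (hE : IsSep E) {c : ℝ} (hc : 0 ≤ c) :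
    IsSep ((c : ℂ) • E) := by
  obtain ⟨n, A, B, hA, hB, rfl⟩ := hE
  refine ⟨n, fun l => (c : ℂ) • A l, B, fun l => psd_smul_real (hA l) hc, hB, ?_⟩
  rw [Finset.smul_sum]
  exact Finset.sum_congr rfl fun l _ => by rw [Matrix.smul_kronecker]

lemma isSep_one : IsSep (1 : Mat dA dB) := by
  have h := isSep_kron (dA := dA) (dB := dB) Matrix.PosSemidef.one Matrix.PosSemidef.one
  rwa [Matrix.one_kronecker_one] at h

lemma isSep_posSemidef {E : Mat dA dB} (hE : IsSep E) : E.PosSemidef := by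
  obtain ⟨n, A, B, hA, hB, rfl⟩ := hE
  exact Finset.sum_induction _ _ (fun _ _ ha hb => ha.add hb) Matrix.PosSemidef.zero
    (fun l _ => by
      obtain ⟨A₀, hA0⟩ : ∃ X, A l = Xᴴ * X := by
        open scoped MatrixOrder in exact CStarAlgebra.nonneg_iff_eq_star_mul_self.mp (hA l).nonneg
      obtain ⟨B₀, hB0⟩ : ∃ X, B l = Xᴴ * X := by
        open scoped MatrixOrder in exact CStarAlgebra.nonneg_iff_eq_star_mul_self.mp (hB l).nonneg
      have h := Matrix.mul_kronecker_mul A₀ᴴ A₀ B₀ᴴ B₀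
      rw [hA0, hB0, h, ← kron_conjT]
      exact Matrix.posSemidef_conjTranspose_mul_self _)

lemma psd_one_sub_smul {n : Type*} [Fintype n] [DecidableEq n] {B : Matrix n n ℂ}
    (hB : B.PosSemidef) {β s : ℝ} (hβ : ((β : ℂ) • 1 - B).PosSemidef)
    (hs : 0 < s) (h1 : s * β ≤ 1) : ((1 : Matrix n n ℂ) - (s : ℂ) • B).PosSemidef := by
  have key : (1 : Matrix n n ℂ) - (s : ℂ) • B
      = (s : ℂ) • ((((s⁻¹ - β : ℝ) : ℂ)) • 1 + ((β : ℂ) • 1 - B)) := by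
    have hc : ((s : ℂ) * ((s⁻¹ - β : ℝ) : ℂ)) + (s : ℂ) * (β : ℂ) = 1 := by
      push_cast
      field_simp
      ring
    rw [smul_add, smul_sub, smul_smul, smul_smul, ← add_sub_assoc, ← add_smul, hc, one_smul]
  rw [key]
  have hβs : (0:ℝ) ≤ s⁻¹ - β := by
    rw [sub_nonneg]
    have h2 : s * β ≤ s * s⁻¹ := by rw [mul_inv_cancel₀ hs.ne']; exact h1
    exact le_of_mul_le_mul_left h2 hs
  exact psd_smul_real ((psd_smul_real Matrix.PosSemidef.one hβs).add hβ) hs.le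

lemma isSep_one_sub_kron {A : Matrix (Fin dA) (Fin dA) ℂ} {B : Matrix (Fin dB) (Fin dB) ℂ}
    (hA : A.PosSemidef) (h1A : ((1 : Matrix (Fin dA) (Fin dA) ℂ) - A).PosSemidef)
    (hB : B.PosSemidef) (h1B : ((1 : Matrix (Fin dB) (Fin dB) ℂ) - B).PosSemidef) :
    IsSep ((1 : Mat dA dB) - Matrix.kroneckerMap (· * ·) A B) := by
  have key : (1 : Mat dA dB) - Matrix.kroneckerMap (· * ·) A B
      = Matrix.kroneckerMap (· * ·) (1 - A) 1 + Matrix.kroneckerMap (· * ·) A (1 - B) := by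
    ext ⟨i, k⟩ ⟨j, l⟩
    simp only [Matrix.sub_apply, Matrix.add_apply, Matrix.kroneckerMap_apply, Matrix.one_apply,
      Prod.mk.injEq]
    by_cases hij : i = j <;> by_cases hkl : k = l <;> simp [hij, hkl] <;> ring
  rw [key]
  exact isSep_add (isSep_kron h1A Matrix.PosSemidef.one) (isSep_kron hA h1B)

lemma exists_shift {n : Type*} [Fintype n] [DecidableEq n] {A : Matrix n n ℂ}
    (hA : A.PosSemidef) :
    ∃ α : ℝ, 0 < α ∧ ((α : ℂ) • (1 : Matrix n n ℂ) - A).PosSemidef := by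
  classical
  refine ⟨∑ i, hA.1.eigenvalues i + 1, ?_, ?_⟩
  · have h := Finset.sum_nonneg (fun i (_ : i ∈ Finset.univ) => hA.eigenvalues_nonneg i)
    linarith
  · set α : ℝ := ∑ i, hA.1.eigenvalues i + 1
    have hU := (Matrix.mem_unitaryGroup_iff).mp (hA.1.eigenvectorUnitary).2
    have key : (α : ℂ) • (1 : Matrix n n ℂ) - A
        = (hA.1.eigenvectorUnitary : Matrix n n ℂ) *
          (Matrix.diagonal fun i => ((α - hA.1.eigenvalues i : ℝ) : ℂ)) *
          (star (hA.1.eigenvectorUnitary : Matrix n n ℂ)) := by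
      conv_lhs => rw [hA.1.spectral_theorem, Unitary.conjStarAlgAut_apply]
      have h1 : (α : ℂ) • (1 : Matrix n n ℂ)
          = (hA.1.eigenvectorUnitary : Matrix n n ℂ) * ((α : ℂ) • 1) *
            (star (hA.1.eigenvectorUnitary : Matrix n n ℂ)) := by
        rw [Matrix.mul_smul, Matrix.smul_mul, mul_one, hU]
      rw [h1]
      rw [← Matrix.sub_mul, ← Matrix.mul_sub]
      congr 2
      ext i j
      by_cases h : i = j <;>
        simp [Matrix.diagonal, h, Matrix.one_apply, Complex.ofReal_sub, Function.comp,
          sub_eq_iff_eq_add]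
    rw [key]
    apply Matrix.PosSemidef.mul_mul_conjTranspose_same
    refine Matrix.posSemidef_diagonal_iff.mpr fun i => ?_
    have h1 : hA.1.eigenvalues i ≤ ∑ j, hA.1.eigenvalues j :=
      Finset.single_le_sum (fun j _ => hA.eigenvalues_nonneg j) (Finset.mem_univ i)
    have : (0:ℝ) ≤ α - hA.1.eigenvalues i := by simp only [α]; linarith
    exact Complex.zero_le_real.mpr this

lemma exists_sep_one_sub {F : Mat dA dB} (hF : IsSep F) :
    ∃ t : ℝ, 0 < t ∧ IsSep ((1 : Mat dA dB) - (t : ℂ) • F) := by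
  obtain ⟨n, A, B, hA, hB, rfl⟩ := hF
  rcases Nat.eq_zero_or_pos n with hn | hn
  · subst hn
    exact ⟨1, one_pos, by simpa using isSep_one⟩
  choose α hα hαA using fun l => exists_shift (hA l)
  choose β hβ hβB using fun l => exists_shift (hB l)
  set T : ℝ := ∑ l, α l * β l with hT
  have hT0 : 0 ≤ T := Finset.sum_nonneg fun l _ => (mul_pos (hα l) (hβ l)).le
  set t : ℝ := ((n : ℝ) * (T + 1))⁻¹ with ht
  have hn0 : (0:ℝ) < n := by exact_mod_cast hn
  have htpos : 0 < t := by
    apply inv_pos.mpr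
    positivity
  refine ⟨t, htpos, ?_⟩
  have key : (1 : Mat dA dB) - (t : ℂ) • ∑ l, Matrix.kroneckerMap (· * ·) (A l) (B l)
      = ∑ l : Fin n, (((n : ℝ)⁻¹ : ℝ) : ℂ) •
          ((1 : Mat dA dB) - Matrix.kroneckerMap (· * ·)
            ((((α l)⁻¹ : ℝ) : ℂ) • A l) (((t * n * α l : ℝ) : ℂ) • B l)) := by
    have hsummand : ∀ l : Fin n, (((n : ℝ)⁻¹ : ℝ) : ℂ) •
          ((1 : Mat dA dB) - Matrix.kroneckerMap (· * ·)
            ((((α l)⁻¹ : ℝ) : ℂ) • A l) (((t * n * α l : ℝ) : ℂ) • B l))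
        = (((n : ℝ)⁻¹ : ℝ) : ℂ) • (1 : Mat dA dB)
          - (t : ℂ) • Matrix.kroneckerMap (· * ·) (A l) (B l) := by
      intro l
      rw [Matrix.smul_kronecker, Matrix.kronecker_smul, smul_sub, smul_smul, smul_smul]
      congr 2
      have hα0 : (α l) ≠ 0 := (hα l).ne'
      have hn' : (n:ℝ) ≠ 0 := hn0.ne'
      push_cast
      field_simp
    rw [Finset.sum_congr rfl fun l _ => hsummand l, Finset.sum_sub_distrib, ← Finset.smul_sum]
    congr 1
    swap
    · exact Finset.smul_sum
    rw [Finset.sum_const, Finset.card_univ, Fintype.card_fin, ← Nat.cast_smul_eq_nsmul ℂ,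
      smul_smul]
    have hn' : (n:ℝ) ≠ 0 := hn0.ne'
    have hc : (((n:ℝ)⁻¹ : ℝ) : ℂ) * (n : ℂ) = 1 := by
      push_cast
      field_simp
    rw [hc, one_smul]
  rw [key]
  apply isSep_sum
  intro l _
  apply isSep_smul _ (by positivity : (0:ℝ) ≤ (n:ℝ)⁻¹)
  have hs1 : (0:ℝ) < (α l)⁻¹ := inv_pos.mpr (hα l)
  have hs2 : (0:ℝ) < t * n * α l := mul_pos (mul_pos htpos hn0) (hα l)
  have hb1 : (α l)⁻¹ * (α l) ≤ 1 := by
    rw [inv_mul_cancel₀ (hα l).ne']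
  have hb2 : t * ↑n * α l * β l ≤ 1 := by
    have hle : α l * β l ≤ T := Finset.single_le_sum
      (fun j (_ : j ∈ Finset.univ) => (mul_pos (hα j) (hβ j)).le) (Finset.mem_univ l)
    have htn : t * (n:ℝ) = (T+1)⁻¹ := by
      rw [ht, mul_inv, mul_comm ((n:ℝ))⁻¹, mul_assoc, inv_mul_cancel₀ hn0.ne', mul_one]
    calc t * ↑n * α l * β l = (T+1)⁻¹ * (α l * β l) := by rw [mul_assoc, htn]
    _ ≤ (T+1)⁻¹ * (T+1) := by
        apply mul_le_mul_of_nonneg_left (by linarith) (by positivity)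
    _ = 1 := inv_mul_cancel₀ (by linarith)
  exact isSep_one_sub_kron (psd_smul_real (hA l) hs1.le)
    (psd_one_sub_smul (hA l) (hαA l) hs1 hb1)
    (psd_smul_real (hB l) hs2.le)
    (psd_one_sub_smul (hB l) (hβB l) hs2 hb2)

end Helpers

theorem pi_sep_optimality_only_if {dA dB : ℕ}
    (η : Fin 4 → ℝ) (ρ : Fin 4 → Mat dA dB)
    (hη : ∀ i, 0 < η i) (hsum : ∑ i, η i = 1)
    (hρ : ∀ i, (ρ i).PosSemidef ∧ (ρ i).trace = 1)
    (s c : Fin 2 → Fin 4) (hbij : Function.Bijective (Sum.elim s c))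
    (ηt : Fin 2 × Fin 2 → ℝ) (ρt : Fin 2 × Fin 2 → Mat dA dB)
    (hηt : ∀ ω, ηt ω = (η (s ω.1) + η (c ω.2)) / 2)
    (hρt : ∀ ω, ρt ω = (((η (s ω.1) + η (c ω.2) : ℝ) : ℂ))⁻¹ •
        ((η (s ω.1) : ℂ) • ρ (s ω.1) + (η (c ω.2) : ℂ) • ρ (c ω.2)))
    (μ ωc : Fin 2 × Fin 2)
    (hnot : ¬ InSEPdual ((ηt μ : ℂ) • ρt μ - (ηt ωc : ℂ) • ρt ωc)) :
    ∃ M : Fin 2 × Fin 2 → Mat dA dB, (∀ ω, IsSep (M ω)) ∧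
      (∀ ω, (M ω).PosSemidef) ∧ ∑ ω, M ω = 1 ∧
      ηt μ < ∑ ω, ηt ω * ((ρt ω * M ω).trace).re := by
  classical
  -- Hermiticity of the tilde states
  have hρtH : ∀ ω, (ρt ω).IsHermitian := by
    intro ω
    rw [hρt ω]
    have h1 := (hρ (s ω.1)).1.1
    have h2 := (hρ (c ω.2)).1.1
    unfold Matrix.IsHermitian at *
    rw [conjTranspose_smul, conjTranspose_add, conjTranspose_smul, conjTranspose_smul, h1, h2]
    simp [star_inv₀, Complex.conj_ofReal]
  set E : Mat dA dB := (ηt μ : ℂ) • ρt μ - (ηt ωc : ℂ) • ρt ωc with hE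
  have hEH : E.IsHermitian := by
    unfold Matrix.IsHermitian
    rw [hE, conjTranspose_sub, conjTranspose_smul, conjTranspose_smul, hρtH, hρtH]
    simp [Complex.conj_ofReal]
  -- extract a violating separable F
  simp only [InSEPdual, not_and] at hnot
  have h2 := hnot hEH
  push_neg at h2
  obtain ⟨F, hFsep, hFlt⟩ := h2
  -- the trace is real and negative
  have hFH : F.IsHermitian := (isSep_posSemidef hFsep).1
  set z : ℂ := (E * F).trace with hz
  have hzim : z.im = 0 := by
    have hstar : star z = z := by
      rw [hz, ← Matrix.trace_conjTranspose, Matrix.conjTranspose_mul, hFH.eq, hEH.eq,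
        Matrix.trace_mul_comm]
    have h3 := congrArg Complex.im hstar
    simp only [Complex.star_def, Complex.conj_im] at h3
    clear hFlt
    linarith
  have hzre : z.re < 0 := by
    by_contra h
    push_neg at h
    exact hFlt (Complex.le_def.mpr ⟨by simpa using h, by simp [hzim]⟩)
  -- μ ≠ ωc
  have hμω : μ ≠ ωc := by
    intro h
    rw [hE, h, sub_self, Matrix.zero_mul, Matrix.trace_zero] at hz
    rw [hz] at hzre
    simp at hzre
  -- positivity of weights
  have hηt : ∀ ω, 0 < ηt ω := by
    intro ω
    rw [hηt ω]
    have ha1 := hη (s ω.1)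
    have ha2 := hη (c ω.2)
    clear hFlt
    linarith
  -- traces of tilde states are one
  have htrρt : ∀ ω, (ρt ω).trace = 1 := by
    intro ω
    rw [hρt ω]
    have h1 := (hρ (s ω.1)).2
    have h2 := (hρ (c ω.2)).2
    have hpos : (0:ℝ) < η (s ω.1) + η (c ω.2) := by
      have ha1 := hη (s ω.1); have ha2 := hη (c ω.2); clear hFlt; linarith
    rw [Matrix.trace_smul, Matrix.trace_add, Matrix.trace_smul, Matrix.trace_smul, h1, h2]
    simp only [smul_eq_mul, mul_one]
    rw [← Complex.ofReal_add, ← Complex.ofReal_inv, ← Complex.ofReal_mul,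
      inv_mul_cancel₀ hpos.ne']
    norm_num
  -- the POVM
  obtain ⟨t, htpos, hsep1⟩ := exists_sep_one_sub hFsep
  set M : Fin 2 × Fin 2 → Mat dA dB := fun ω =>
    (if ω = ωc then (t : ℂ) • F else 0) + (if ω = μ then 1 - (t : ℂ) • F else 0) with hM
  have hMsep : ∀ ω, IsSep (M ω) := by
    intro ω
    rw [hM]
    by_cases h1 : ω = ωc
    · have h2 : ω ≠ μ := by rw [h1]; exact fun hh => hμω hh.symm
      simp only [h1, if_pos rfl, if_neg (h1 ▸ h2), add_zero]
      exact isSep_smul hFsep htpos.le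
    · by_cases h2 : ω = μ
      · simp only [if_neg h1, if_pos h2, zero_add]
        exact hsep1
      · simp only [if_neg h1, if_neg h2, add_zero]
        exact isSep_zero
  refine ⟨M, hMsep, fun ω => isSep_posSemidef (hMsep ω), ?_, ?_⟩
  · rw [hM]
    rw [Finset.sum_add_distrib]
    rw [Finset.sum_ite_eq' Finset.univ ωc fun _ => (t : ℂ) • F,
      Finset.sum_ite_eq' Finset.univ μ fun _ => (1 : Mat dA dB) - (t : ℂ) • F]
    simp
  · have hsplit : ∀ (X : Mat dA dB) (ω₀ : Fin 2 × Fin 2),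
        ∑ ω, ηt ω * ((ρt ω * (if ω = ω₀ then X else 0)).trace).re
          = ηt ω₀ * ((ρt ω₀ * X).trace).re := by
      intro X ω₀
      rw [Finset.sum_eq_single ω₀]
      · simp
      · intro b _ hb; simp [hb]
      · intro h; exact absurd (Finset.mem_univ _) h
    have hexp : ∑ ω, ηt ω * ((ρt ω * M ω).trace).re
        = ηt ωc * ((ρt ωc * ((t : ℂ) • F)).trace).re
          + ηt μ * ((ρt μ * ((1 : Mat dA dB) - (t : ℂ) • F)).trace).re := by
      have : ∀ ω, ηt ω * ((ρt ω * M ω).trace).re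
          = ηt ω * ((ρt ω * (if ω = ωc then (t : ℂ) • F else 0)).trace).re
            + ηt ω * ((ρt ω * (if ω = μ then (1 : Mat dA dB) - (t : ℂ) • F else 0)).trace).re := by
        intro ω
        rw [hM, Matrix.mul_add, Matrix.trace_add, Complex.add_re, mul_add]
      rw [Finset.sum_congr rfl fun ω _ => this ω, Finset.sum_add_distrib, hsplit, hsplit]
    rw [hexp]
    -- compute both traces
    set a : ℝ := ((ρt μ * F).trace).re with ha
    set b : ℝ := ((ρt ωc * F).trace).re with hb
    have htr1 : ((ρt ωc * ((t : ℂ) • F)).trace).re = t * b := by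
      rw [Matrix.mul_smul, Matrix.trace_smul]
      simp [hb, Complex.mul_re, Complex.ofReal_re, Complex.ofReal_im, smul_eq_mul]
    have htr2 : ((ρt μ * ((1 : Mat dA dB) - (t : ℂ) • F)).trace).re = 1 - t * a := by
      rw [Matrix.mul_sub, Matrix.mul_one, Matrix.trace_sub, Matrix.mul_smul, Matrix.trace_smul,
        htrρt μ]
      simp [ha, Complex.mul_re, Complex.ofReal_re, Complex.ofReal_im, smul_eq_mul]
    have hzre' : z.re = ηt μ * a - ηt ωc * b := by
      rw [hz, hE, Matrix.sub_mul, Matrix.smul_mul, Matrix.smul_mul, Matrix.trace_sub,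
        Matrix.trace_smul, Matrix.trace_smul]
      simp [ha, hb, Complex.mul_re, Complex.ofReal_re, Complex.ofReal_im, smul_eq_mul]
    rw [htr1, htr2]
    clear hFlt
    nlinarith [mul_pos htpos (neg_pos.mpr hzre), hzre']
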